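/- For every real Δ > 0 and every odd positive integer n, the terminating hypergeometric sum Σ_{m=0}^{n} [(−n)_m ((4Δ/3) + n − 1)_m (Δ/3)_m] / [((2Δ/3)_m)² m!] equals 0. Equivalently, the continuous Hahn polynomial with parameters a = b = 2Δ/3, c = d = 0 vanishes at x = −Δ/3 whenever its degree is odd. -/

import Mathlib

/-- Pochhammer symbol `(x)_m = x(x+1)⋯(x+m−1)`, with `(x)_0 = 1`. -/
noncomputable def poch (x : ℝ) : ℕ → ℝ
  | 0 => 1
  | m + 1 => poch x m * (x + m)

/-- Continuous Hahn polynomial `P̃_n(a,b,c,d;x)` in its terminating ₃F₂ form. -/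
noncomputable def continuousHahn (a b c d x : ℝ) (n : ℕ) : ℝ :=
  ∑ m ∈ Finset.range (n + 1),
    (poch (-(n : ℝ)) m * poch ((n : ℝ) + a + b + c + d - 1) m * poch (a + x) m)
    / (poch (a + c) m * poch (a + d) m * (m.factorial : ℝ))

@[simp] lemma poch_zero (x : ℝ) : poch x 0 = 1 := rfl
lemma poch_succ (x : ℝ) (m : ℕ) : poch x (m+1) = poch x m * (x + m) := rfl

lemma poch_pos {x : ℝ} (hx : 0 < x) (m : ℕ) : 0 < poch x m := by
  induction m with
  | zero => simp
  | succ m ih => rw [poch_succ]; positivity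

lemma poch_add (x : ℝ) (m k : ℕ) : poch x (m + k) = poch x m * poch (x + m) k := by
  induction k with
  | zero => simp
  | succ k ih =>
    rw [show m + (k+1) = (m+k)+1 by ring, poch_succ, ih, poch_succ]
    push_cast; ring

lemma poch_one_add (x : ℝ) (k : ℕ) : poch x (k+1) = x * poch (x+1) k := by
  have := poch_add x 1 k
  rw [show 1 + k = k + 1 from Nat.add_comm 1 k] at this
  simpa [poch_succ] using this

/-- reflection: `(1−y−k)_k = (−1)^k (y)_k`. -/
lemma poch_reflect (y : ℝ) (k : ℕ) : poch (1 - y - k) k = (-1)^k * poch y k := by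
  induction k generalizing y with
  | zero => simp
  | succ k ih =>
    have h1 : poch y (k+1) = y * poch (y+1) k := poch_one_add y k
    rw [poch_succ]
    have h2 : (1 - y - ((k:ℝ)+1)) = 1 - (y+1) - k := by push_cast; ring
    push_cast
    rw [h2, ih (y+1), h1]
    ring

/-- `(−N)_j = (−1)^j C(N,j) j!` for all `j`. -/
lemma poch_neg_nat (N j : ℕ) :
    poch (-(N:ℝ)) j = (-1)^j * (N.choose j : ℝ) * (j.factorial : ℝ) := by
  induction j with
  | zero => simp
  | succ j ih =>
    rw [poch_succ, ih]
    rcases lt_or_ge j N with h | h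
    · have hc : (N.choose j : ℝ) * (-(N:ℝ) + j) = -((N.choose (j+1) : ℝ) * ((j:ℝ)+1)) := by
        have h0 := Nat.choose_succ_right_eq N j
        have h1 : ((N.choose (j+1) * (j+1) : ℕ) : ℝ) = ((N.choose j * (N - j) : ℕ) : ℝ) := by
          rw [h0]
        push_cast [Nat.cast_sub h.le] at h1
        linarith
      calc (-1)^j * (N.choose j : ℝ) * (j.factorial : ℝ) * (-(N:ℝ) + j)
          = (-1)^j * (j.factorial : ℝ) * ((N.choose j : ℝ) * (-(N:ℝ) + j)) := by ring
        _ = (-1)^(j+1) * (N.choose (j+1) : ℝ) * ((j+1).factorial : ℝ) := by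
            rw [hc]; push_cast [Nat.factorial_succ]; ring
    · have h1 : N.choose (j+1) = 0 := Nat.choose_eq_zero_of_lt (by omega)
      rcases eq_or_lt_of_le h with rfl | h2
      · simp [Nat.choose_self, h1]
      · have : N.choose j = 0 := Nat.choose_eq_zero_of_lt h2
        simp [this, h1]

lemma vdm (b : ℝ) : ∀ (N : ℕ) (c : ℝ),
    ∑ j ∈ Finset.range (N+1),
      (-1)^j * (N.choose j : ℝ) * poch b j * poch (c + j) (N - j) = poch (c - b) N := by
  intro N
  induction N with
  | zero => intro c; simp
  | succ N ih =>
    intro c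
    rw [Finset.sum_range_succ']
    have e1 : ∀ i ∈ Finset.range (N+1),
        (-1)^(i+1) * ((N+1).choose (i+1) : ℝ) * poch b (i+1) * poch (c + ↑(i+1)) (N+1 - (i+1))
        = (-1)^(i+1) * ((N.choose i : ℝ) + (N.choose (i+1) : ℝ)) * (poch b i * (b+i))
            * poch ((c+1) + i) (N - i) := by
      intro i _
      rw [show N + 1 - (i+1) = N - i by omega, Nat.choose_succ_succ, poch_succ]
      push_cast [Nat.succ_eq_add_one]
      rw [show c + ((i:ℝ)+1) = (c+1) + i by ring]
    rw [Finset.sum_congr rfl e1]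
    have e2 : ∀ i ∈ Finset.range (N+1),
        (-1)^(i+1) * ((N.choose i : ℝ) + (N.choose (i+1) : ℝ)) * (poch b i * (b+i))
            * poch ((c+1) + i) (N - i)
        = (-1)^(i+1) * (N.choose i : ℝ) * (poch b i * (b+i)) * poch ((c+1) + i) (N - i)
          + (-1)^(i+1) * (N.choose (i+1) : ℝ) * poch b (i+1) * poch ((c+1) + i) (N - i) := by
      intro i _; rw [poch_succ]; ring
    rw [Finset.sum_congr rfl e2, Finset.sum_add_distrib]
    have hA : (∑ i ∈ Finset.range (N+1),
          (-1)^(i+1) * (N.choose (i+1) : ℝ) * poch b (i+1) * poch ((c+1) + i) (N - i))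
        + ((-1)^0 * ((N+1).choose 0 : ℝ) * poch b 0 * poch (c + (0:ℕ)) (N+1-0))
        = ∑ j ∈ Finset.range (N+1),
            (-1)^j * (N.choose j : ℝ) * poch b j * poch (c + j) (N + 1 - j) := by
      rw [Finset.sum_range_succ (fun i => (-1)^(i+1) * (N.choose (i+1) : ℝ) * poch b (i+1) * poch ((c+1) + i) (N - i)) N]
      rw [Finset.sum_range_succ' (fun j => (-1)^j * (N.choose j : ℝ) * poch b j * poch (c + j) (N + 1 - j)) N]
      simp only [Nat.choose_succ_self, Nat.cast_zero]
      rw [mul_zero, zero_mul, zero_mul, add_zero]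
      congr 1
      · apply Finset.sum_congr rfl
        intro i _
        rw [show N + 1 - (i+1) = N - i by omega]
        rw [show c + 1 + ((i:ℕ):ℝ) = c + (((i+1):ℕ):ℝ) by push_cast; ring]
      · simp
    rw [add_assoc, hA]
    have e3 : ∀ j ∈ Finset.range (N+1),
        (-1)^(j+1) * (N.choose j : ℝ) * (poch b j * (b+j)) * poch ((c+1) + j) (N - j)
        + (-1)^j * (N.choose j : ℝ) * poch b j * poch (c + j) (N + 1 - j)
        = (c - b) * ((-1)^j * (N.choose j : ℝ) * poch b j * poch ((c+1) + j) (N - j)) := by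
      intro j hj
      have hj' := Finset.mem_range.mp hj
      rw [show N + 1 - j = (N - j) + 1 by omega, poch_one_add,
        show c + (j:ℝ) + 1 = (c+1) + j by ring]
      ring
    rw [← Finset.sum_add_distrib, Finset.sum_congr rfl e3, ← Finset.mul_sum, ih (c+1),
      show c + 1 - b = (c - b) + 1 by ring, ← poch_one_add]

/-- terminating Gauss summation `₂F₁(−N, b; c; 1) = (c−b)_N / (c)_N`. -/
lemma gauss (N : ℕ) (b c : ℝ) (hc : 0 < c) :
    ∑ j ∈ Finset.range (N+1),
      poch (-(N:ℝ)) j * poch b j / (poch c j * (j.factorial : ℝ))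
    = poch (c - b) N / poch c N := by
  have hcN := (poch_pos hc N).ne'
  rw [eq_div_iff hcN, Finset.sum_mul, ← vdm b N c]
  apply Finset.sum_congr rfl
  intro j hj
  have hj' : j ≤ N := by have := Finset.mem_range.mp hj; omega
  have hsplit : poch c N = poch c j * poch (c + j) (N - j) := by
    have h := poch_add c j (N - j)
    rwa [Nat.add_sub_cancel' hj'] at h
  rw [poch_neg_nat N j, hsplit]
  have h1 : poch c j ≠ 0 := (poch_pos hc j).ne'
  have h2 : (j.factorial : ℝ) ≠ 0 := Nat.cast_ne_zero.mpr j.factorial_ne_zero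
  field_simp

/-- reversal: `(x)_{n−k} (1−x−n)_k = (−1)^k (x)_n`. -/
lemma poch_rev (x : ℝ) {k n : ℕ} (hk : k ≤ n) :
    poch x (n - k) * poch (1 - x - (n:ℝ)) k = (-1)^k * poch x n := by
  have h : poch x n = poch x (n - k) * poch (x + ((n-k : ℕ):ℝ)) k := by
    have h0 := poch_add x (n - k) k
    rwa [Nat.sub_add_cancel hk] at h0
  have h2 : poch (x + ((n-k : ℕ):ℝ)) k = (-1)^k * poch (1 - x - (n:ℝ)) k := by
    have h3 := poch_reflect (1 - x - (n:ℝ)) k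
    rw [show (1 - (1 - x - (n:ℝ)) - (k:ℝ)) = x + ((n:ℝ) - k) by ring] at h3
    rw [show x + ((n-k:ℕ):ℝ) = x + ((n:ℝ) - (k:ℝ)) by rw [Nat.cast_sub hk]]
    exact h3
  have hsq : ((-1:ℝ))^k * (-1)^k = 1 := by rw [← mul_pow]; norm_num
  calc poch x (n-k) * poch (1 - x - (n:ℝ)) k
      = ((-1)^k * (-1)^k) * (poch x (n-k) * poch (1 - x - (n:ℝ)) k) := by rw [hsq]; ring
    _ = (-1)^k * poch x n := by rw [h, h2]; ring

lemma poch_rev_div (x : ℝ) {k n : ℕ} (hk : k ≤ n)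
    (hne : poch (1 - x - (n:ℝ)) k ≠ 0) :
    poch x (n - k) = (-1)^k * poch x n / poch (1 - x - (n:ℝ)) k := by
  rw [eq_div_iff hne]
  exact poch_rev x hk

/-- nonvanishing: for `0 < x` and `k ≤ n`, `(1−x−n)_k ≠ 0`. -/
lemma poch_ne_neg {x : ℝ} (hx : 0 < x) {k n : ℕ} (hk : k ≤ n) :
    poch (1 - x - (n:ℝ)) k ≠ 0 := by
  have h := poch_reflect (x + (n:ℝ) - k) k
  rw [show 1 - (x + (n:ℝ) - k) - (k:ℝ) = 1 - x - (n:ℝ) by ring] at h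
  rw [h]
  have hpos : 0 < poch (x + (n:ℝ) - k) k := by
    apply poch_pos
    have : (k:ℝ) ≤ (n:ℝ) := by exact_mod_cast hk
    linarith
  exact mul_ne_zero (pow_ne_zero _ (by norm_num)) hpos.ne'


lemma pairing_term (a : ℝ) (ha : 0 < a) {n k : ℕ} (hk : k ≤ n) (hodd : Odd n) :
    poch (-(n:ℝ)) (n-k) * poch (1-2*a-(n:ℝ)) (n-k) * poch a (n-k)
      / (poch (2*a) (n-k) * poch (1-a-(n:ℝ)) (n-k) * ((n-k).factorial : ℝ))
    = -(poch (-(n:ℝ)) k * poch (1-2*a-(n:ℝ)) k * poch a k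
      / (poch (2*a) k * poch (1-a-(n:ℝ)) k * (k.factorial : ℝ))) := by
  have h2a : 0 < 2*a := by linarith
  have hAne : poch (1-a-(n:ℝ)) k ≠ 0 := poch_ne_neg ha hk
  have hCne : poch (1-2*a-(n:ℝ)) k ≠ 0 := poch_ne_neg h2a hk
  have hA := poch_rev_div a hk hAne
  have hC := poch_rev_div (2*a) hk hCne
  -- hB : poch (1-2a-n) (n-k)
  have hBne : poch (1 - (1-2*a-(n:ℝ)) - (n:ℝ)) k ≠ 0 := by
    rw [show 1 - (1-2*a-(n:ℝ)) - (n:ℝ) = 2*a by ring]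
    exact (poch_pos h2a k).ne'
  have hB := poch_rev_div (1-2*a-(n:ℝ)) hk hBne
  rw [show 1 - (1-2*a-(n:ℝ)) - (n:ℝ) = 2*a by ring] at hB
  have hrefl2a : poch (1-2*a-(n:ℝ)) n = -poch (2*a) n := by
    have h := poch_reflect (2*a) n
    rw [Odd.neg_one_pow hodd] at h
    rw [show 1 - 2*a - (n:ℝ) = 1 - 2*a - (n:ℝ) by ring] at h
    linarith [h]
  rw [hrefl2a] at hB
  -- hD : poch (1-a-n) (n-k)
  have hDne : poch (1 - (1-a-(n:ℝ)) - (n:ℝ)) k ≠ 0 := by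
    rw [show 1 - (1-a-(n:ℝ)) - (n:ℝ) = a by ring]
    exact (poch_pos ha k).ne'
  have hD := poch_rev_div (1-a-(n:ℝ)) hk hDne
  rw [show 1 - (1-a-(n:ℝ)) - (n:ℝ) = a by ring] at hD
  have hrefla : poch (1-a-(n:ℝ)) n = -poch a n := by
    have h := poch_reflect a n
    rw [Odd.neg_one_pow hodd] at h
    linarith [h]
  rw [hrefla] at hD
  have hE : ((-1:ℝ))^(n-k) = -(-1)^k := by
    have h := pow_add (-1:ℝ) (n-k) k
    rw [Nat.sub_add_cancel hk, Odd.neg_one_pow hodd] at h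
    have hsq : ((-1:ℝ))^k * (-1)^k = 1 := by rw [← mul_pow]; norm_num
    calc ((-1:ℝ))^(n-k) = ((-1:ℝ))^(n-k) * ((-1)^k * (-1)^k) := by rw [hsq, mul_one]
      _ = (((-1:ℝ))^(n-k) * (-1)^k) * (-1)^k := by ring
      _ = -(-1)^k := by rw [← h]; ring
  rw [hA, hB, hC, hD, poch_neg_nat n (n-k), poch_neg_nat n k, Nat.choose_symm hk, hE]
  have h1 : poch (2*a) k ≠ 0 := (poch_pos h2a k).ne'
  have h2 : poch a k ≠ 0 := (poch_pos ha k).ne'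
  have h3 : poch (2*a) n ≠ 0 := (poch_pos h2a n).ne'
  have h4 : poch a n ≠ 0 := (poch_pos ha n).ne'
  have h5 : ((n-k).factorial : ℝ) ≠ 0 := Nat.cast_ne_zero.mpr (Nat.factorial_ne_zero _)
  have h6 : ((k).factorial : ℝ) ≠ 0 := Nat.cast_ne_zero.mpr (Nat.factorial_ne_zero _)
  have h7 : ((-1:ℝ))^k ≠ 0 := pow_ne_zero _ (by norm_num)
  field_simp

lemma pairing (a : ℝ) (ha : 0 < a) (n : ℕ) (hodd : Odd n) :
    ∑ k ∈ Finset.range (n+1),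
      poch (-(n:ℝ)) k * poch (1-2*a-(n:ℝ)) k * poch a k
        / (poch (2*a) k * poch (1-a-(n:ℝ)) k * (k.factorial : ℝ)) = 0 := by
  set f : ℕ → ℝ := fun k =>
    poch (-(n:ℝ)) k * poch (1-2*a-(n:ℝ)) k * poch a k
      / (poch (2*a) k * poch (1-a-(n:ℝ)) k * (k.factorial : ℝ)) with hf
  have hrefl : ∑ k ∈ Finset.range (n+1), f (n - k) = ∑ k ∈ Finset.range (n+1), f k := by
    have h := Finset.sum_range_reflect f (n+1)
    simpa using h
  have hneg : ∀ k ∈ Finset.range (n+1), f (n - k) = -f k := by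
    intro k hkmem
    have hk : k ≤ n := by have := Finset.mem_range.mp hkmem; omega
    exact pairing_term a ha hk hodd
  have : ∑ k ∈ Finset.range (n+1), f k = -∑ k ∈ Finset.range (n+1), f k := by
    calc ∑ k ∈ Finset.range (n+1), f k = ∑ k ∈ Finset.range (n+1), f (n-k) := hrefl.symm
      _ = ∑ k ∈ Finset.range (n+1), -f k := Finset.sum_congr rfl hneg
      _ = -∑ k ∈ Finset.range (n+1), f k := by rw [Finset.sum_neg_distrib]
  linarith


lemma transform (a : ℝ) (ha : 0 < a) (n : ℕ) :
    ∑ m ∈ Finset.range (n+1),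
      poch (-(n:ℝ)) m * poch ((n:ℝ)+4*a-1) m * poch a m
        / (poch (2*a) m * poch (2*a) m * (m.factorial : ℝ))
    = (poch a n / poch (2*a) n) *
      ∑ k ∈ Finset.range (n+1),
        poch (-(n:ℝ)) k * poch (1-2*a-(n:ℝ)) k * poch a k
          / (poch (2*a) k * poch (1-a-(n:ℝ)) k * (k.factorial : ℝ)) := by
  have h2a : 0 < 2*a := by linarith
  set F : ℕ → ℕ → ℝ := fun m k =>
    poch (-(n:ℝ)) m * poch a m *
      ((-1)^k * (m.choose k : ℝ) * poch (1-2*a-(n:ℝ)) k * poch (2*a+k) (m-k))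
      / (poch (2*a) m * poch (2*a) m * (m.factorial : ℝ)) with hF
  -- Step 1: expand each term by Vandermonde
  have step1 : ∀ m ∈ Finset.range (n+1),
      poch (-(n:ℝ)) m * poch ((n:ℝ)+4*a-1) m * poch a m
        / (poch (2*a) m * poch (2*a) m * (m.factorial : ℝ))
      = ∑ k ∈ Finset.range (n+1), F m k := by
    intro m hm
    have hmn : m ≤ n := by have := Finset.mem_range.mp hm; omega
    have hv := vdm (1-2*a-(n:ℝ)) m (2*a)
    rw [show (2*a - (1-2*a-(n:ℝ))) = (n:ℝ)+4*a-1 by ring] at hv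
    have hext : ∑ k ∈ Finset.range (m+1),
          (-1)^k * (m.choose k : ℝ) * poch (1-2*a-(n:ℝ)) k * poch (2*a + k) (m-k)
        = ∑ k ∈ Finset.range (n+1),
          (-1)^k * (m.choose k : ℝ) * poch (1-2*a-(n:ℝ)) k * poch (2*a + k) (m-k) := by
      apply Finset.sum_subset
      · exact Finset.range_subset_range.mpr (by omega)
      · intro k _ hk2
        have : m < k := by
          have := Finset.mem_range.not.mp hk2; omega
        rw [Nat.choose_eq_zero_of_lt this]
        simp
    calc poch (-(n:ℝ)) m * poch ((n:ℝ)+4*a-1) m * poch a m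
          / (poch (2*a) m * poch (2*a) m * (m.factorial : ℝ))
        = poch (-(n:ℝ)) m * poch a m *
            (∑ k ∈ Finset.range (n+1),
              (-1)^k * (m.choose k : ℝ) * poch (1-2*a-(n:ℝ)) k * poch (2*a + k) (m-k))
          / (poch (2*a) m * poch (2*a) m * (m.factorial : ℝ)) := by
          rw [← hext, hv]; ring
      _ = ∑ k ∈ Finset.range (n+1), F m k := by
          simp only [hF]
          rw [← Finset.sum_div, ← Finset.mul_sum]
  rw [Finset.sum_congr rfl step1, Finset.sum_comm]
  -- Step 2: evaluate each inner sum by Gauss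
  rw [Finset.mul_sum]
  apply Finset.sum_congr rfl
  intro k hkmem
  have hk : k ≤ n := by have := Finset.mem_range.mp hkmem; omega
  have hk2a : (0:ℝ) < 2*a + k := by positivity
  -- drop vanishing initial terms and reindex
  have hdrop : ∑ m ∈ Finset.range (n+1), F m k = ∑ j ∈ Finset.range (n+1-k), F (k+j) k := by
    rw [← Finset.sum_range_add_sum_Ico _ (show k ≤ n+1 by omega)]
    have hz : ∑ m ∈ Finset.range k, F m k = 0 := by
      apply Finset.sum_eq_zero
      intro m hm
      have : m < k := Finset.mem_range.mp hm
      simp only [hF, Nat.choose_eq_zero_of_lt this]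
      simp
    rw [hz, zero_add, Finset.sum_Ico_eq_sum_range]
  rw [hdrop]
  -- factor each term
  have hfac : ∀ j ∈ Finset.range (n+1-k), F (k+j) k
      = ((-1)^k * poch (-(n:ℝ)) k * poch a k * poch (1-2*a-(n:ℝ)) k
          / (poch (2*a) k * poch (2*a) k * (k.factorial : ℝ)))
        * (poch ((-(n:ℝ))+k) j * poch (a+k) j / (poch (2*a+k) j * (j.factorial : ℝ))) := by
    intro j _
    simp only [hF]
    rw [poch_add (-(n:ℝ)) k j, poch_add a k j, poch_add (2*a) k j,
      Nat.add_sub_cancel_left]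
    have hsymm : (k+j).choose k = (k+j).choose j := by
      rw [← Nat.choose_symm (Nat.le_add_right k j), Nat.add_sub_cancel_left]
    have hch : ((k+j).choose k : ℝ) * (k.factorial : ℝ) * (j.factorial : ℝ)
        = ((k+j).factorial : ℝ) := by
      rw [hsymm]
      exact_mod_cast congrArg (Nat.cast (R := ℝ)) (Nat.add_choose_mul_factorial_mul_factorial k j)
    have hnz1 : poch (2*a) k ≠ 0 := (poch_pos h2a k).ne'
    have hnz2 : poch (2*a+k) j ≠ 0 := (poch_pos hk2a j).ne'
    have hnz3 : ((k+j).factorial : ℝ) ≠ 0 := Nat.cast_ne_zero.mpr (Nat.factorial_ne_zero _)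
    have hnz4 : (k.factorial : ℝ) ≠ 0 := Nat.cast_ne_zero.mpr (Nat.factorial_ne_zero _)
    have hnz5 : (j.factorial : ℝ) ≠ 0 := Nat.cast_ne_zero.mpr (Nat.factorial_ne_zero _)
    field_simp
    rw [← hch]
    push_cast
    ring
  rw [Finset.sum_congr rfl hfac, ← Finset.mul_sum]
  -- Gauss summation
  have hgauss : ∑ j ∈ Finset.range (n+1-k),
      poch ((-(n:ℝ))+k) j * poch (a+k) j / (poch (2*a+k) j * (j.factorial : ℝ))
      = poch a (n-k) / poch (2*a+k) (n-k) := by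
    have hg := gauss (n-k) (a+k) (2*a+k) hk2a
    rw [show (2*a+(k:ℝ) - (a+(k:ℝ))) = a by ring] at hg
    rw [show n+1-k = (n-k)+1 by omega]
    rw [show (-(n:ℝ))+k = -(((n-k:ℕ)):ℝ) by rw [Nat.cast_sub hk]; ring]
    exact hg
  rw [hgauss]
  -- final algebra
  have hAne : poch (1-a-(n:ℝ)) k ≠ 0 := poch_ne_neg ha hk
  have hA := poch_rev_div a hk hAne
  have hsplit : poch (2*a) n = poch (2*a) k * poch (2*a+(k:ℝ)) (n-k) := by
    have h := poch_add (2*a) k (n-k)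
    rwa [Nat.add_sub_cancel' hk] at h
  have hnz1 : poch (2*a) k ≠ 0 := (poch_pos h2a k).ne'
  have hnz2 : poch (2*a+(k:ℝ)) (n-k) ≠ 0 := (poch_pos hk2a (n-k)).ne'
  have hnz3 : poch (2*a) n ≠ 0 := (poch_pos h2a n).ne'
  have hnz4 : (k.factorial : ℝ) ≠ 0 := Nat.cast_ne_zero.mpr (Nat.factorial_ne_zero _)
  have hgn : ((-1:ℝ))^k * poch (-(n:ℝ)) k = (n.choose k : ℝ) * (k.factorial : ℝ) := by
    rw [poch_neg_nat, ← mul_assoc, ← mul_assoc, ← mul_pow]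
    norm_num
  rw [hA, poch_neg_nat n k]
  rw [show poch (2*a+(k:ℕ)) (n-k) = poch (2*a) n / poch (2*a) k by
    rw [eq_div_iff hnz1]; rw [hsplit]; ring]
  field_simp
  ring_nf
  rw [show ((-1:ℝ))^(k*2) = 1 by
    rw [pow_mul']; norm_num, mul_one]

/-- The odd-degree continuous Hahn polynomials with parameters `a = b = 2Δ/3`,
`c = d = 0` vanish at `x = −Δ/3`. -/
theorem stmt_8 (Δ : ℝ) (hΔ : 0 < Δ) (n : ℕ) (hodd : Odd n) (hpos : 0 < n) :
    (∑ m ∈ Finset.range (n + 1),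
      (poch (-(n : ℝ)) m * poch (4*Δ/3 + (n : ℝ) - 1) m * poch (Δ/3) m)
      / ((poch (2*Δ/3) m)^2 * (m.factorial : ℝ))) = 0
    ∧ continuousHahn (2*Δ/3) (2*Δ/3) 0 0 (-(Δ/3)) n = 0 := by
  have ha : (0:ℝ) < Δ/3 := by positivity
  have e : ∀ m ∈ Finset.range (n+1),
      (poch (-(n : ℝ)) m * poch (4*Δ/3 + (n : ℝ) - 1) m * poch (Δ/3) m)
        / ((poch (2*Δ/3) m)^2 * (m.factorial : ℝ))
      = poch (-(n:ℝ)) m * poch ((n:ℝ)+4*(Δ/3)-1) m * poch (Δ/3) m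
        / (poch (2*(Δ/3)) m * poch (2*(Δ/3)) m * (m.factorial : ℝ)) := by
    intro m _
    rw [show 4*Δ/3 + (n:ℝ) - 1 = (n:ℝ)+4*(Δ/3)-1 by ring,
      show (2*Δ/3 : ℝ) = 2*(Δ/3) by ring, sq]
  have h1 : (∑ m ∈ Finset.range (n + 1),
      (poch (-(n : ℝ)) m * poch (4*Δ/3 + (n : ℝ) - 1) m * poch (Δ/3) m)
      / ((poch (2*Δ/3) m)^2 * (m.factorial : ℝ))) = 0 := by
    rw [Finset.sum_congr rfl e, transform (Δ/3) ha n, pairing (Δ/3) ha n hodd, mul_zero]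
  refine ⟨h1, ?_⟩
  have e2 : ∀ m ∈ Finset.range (n+1),
      (poch (-(n : ℝ)) m * poch ((n : ℝ) + 2*Δ/3 + 2*Δ/3 + 0 + 0 - 1) m
          * poch (2*Δ/3 + -(Δ/3)) m)
        / (poch (2*Δ/3 + 0) m * poch (2*Δ/3 + 0) m * (m.factorial : ℝ))
      = (poch (-(n : ℝ)) m * poch (4*Δ/3 + (n : ℝ) - 1) m * poch (Δ/3) m)
        / ((poch (2*Δ/3) m)^2 * (m.factorial : ℝ)) := by
    intro m _
    rw [show (n:ℝ) + 2*Δ/3 + 2*Δ/3 + 0 + 0 - 1 = 4*Δ/3 + (n:ℝ) - 1 by ring,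
      show (2*Δ/3 + -(Δ/3) : ℝ) = Δ/3 by ring,
      show (2*Δ/3 + 0 : ℝ) = 2*Δ/3 by ring, sq]
  rw [continuousHahn, Finset.sum_congr rfl e2]
  exact h1
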